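/- Stage order condition C(q): Let H be symmetric positive definite, Θ an n×n matrix with M = Θ + χ₀χ₀ᵀ invertible, D = H⁻¹Θ, and c the rescaled abscissa with scale h ≠ 0. Assume D c^j = (j/h) c^{j−1} for 1 ≤ j ≤ q and χ₀ᵀ c^j = 0 for 1 ≤ j ≤ q. Then A := (1/h) M⁻¹ H satisfies A c^{j−1} = c^j / j for all 1 ≤ j ≤ q. -/
import Mathlib


open Matrix

theorem gsbp_stage_order_Cq {n q : ℕ}
    (H Θ : Matrix (Fin n) (Fin n) ℝ) (χ0 : Fin n → ℝ)
    (hH : H.PosDef)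
    (M : Matrix (Fin n) (Fin n) ℝ) (hM : M = Θ + vecMulVec χ0 χ0)
    (hMinv : IsUnit M.det)
    (D : Matrix (Fin n) (Fin n) ℝ) (hD : D = H⁻¹ * Θ)
    (h : ℝ) (hh : h ≠ 0) (c : Fin n → ℝ)
    (hDc : ∀ j : ℕ, 1 ≤ j → j ≤ q →
      D *ᵥ (fun i => c i ^ j) = fun i => ((j : ℝ) / h) * c i ^ (j - 1))
    (hX : ∀ j : ℕ, 1 ≤ j → j ≤ q → χ0 ⬝ᵥ (fun i => c i ^ j) = 0)
    (A : Matrix (Fin n) (Fin n) ℝ) (hA : A = (1 / h) • (M⁻¹ * H)) :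
    ∀ j : ℕ, 1 ≤ j → j ≤ q →
      A *ᵥ (fun i => c i ^ (j - 1)) = fun i => c i ^ j / j := by
  intro j hj1 hjq
  have hjR : (j : ℝ) ≠ 0 := Nat.cast_ne_zero.mpr (by omega)
  have hHdet : IsUnit H.det := isUnit_iff_ne_zero.mpr hH.det_pos.ne'
  -- Θ *ᵥ c^j = (j/h) • (H *ᵥ c^{j-1})
  have hΘ : Θ *ᵥ (fun i => c i ^ j) = ((j : ℝ) / h) • (H *ᵥ fun i => c i ^ (j - 1)) := by
    have h1 : H *ᵥ (D *ᵥ fun i => c i ^ j) = Θ *ᵥ (fun i => c i ^ j) := by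
      rw [hD, mulVec_mulVec, ← Matrix.mul_assoc, mul_nonsing_inv _ hHdet, Matrix.one_mul]
    rw [← h1, hDc j hj1 hjq]
    have : (fun i => ((j : ℝ) / h) * c i ^ (j - 1)) =
        ((j : ℝ) / h) • (fun i => c i ^ (j - 1)) := rfl
    rw [this, Matrix.mulVec_smul]
  -- M *ᵥ c^j = Θ *ᵥ c^j
  have hMv : M *ᵥ (fun i => c i ^ j) = Θ *ᵥ (fun i => c i ^ j) := by
    rw [hM, Matrix.add_mulVec]
    have : vecMulVec χ0 χ0 *ᵥ (fun i => c i ^ j) = 0 := by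
      ext i
      simp [vecMulVec_apply, Matrix.mulVec, dotProduct, mul_assoc, ← Finset.mul_sum]
      right
      exact hX j hj1 hjq
    rw [this, add_zero]
  -- H *ᵥ c^{j-1} = (h/j) • (M *ᵥ c^j)
  have hKey : H *ᵥ (fun i => c i ^ (j - 1)) = (h / (j:ℝ)) • (M *ᵥ fun i => c i ^ j) := by
    rw [hMv, hΘ, smul_smul, div_mul_div_comm, mul_comm h (j:ℝ), div_self (by
      exact mul_ne_zero hjR hh), one_smul]
  rw [hA, Matrix.smul_mulVec]
  have : (M⁻¹ * H) *ᵥ (fun i => c i ^ (j - 1)) = M⁻¹ *ᵥ (H *ᵥ fun i => c i ^ (j - 1)) := by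
    rw [mulVec_mulVec]
  rw [this, hKey, Matrix.mulVec_smul, mulVec_mulVec, nonsing_inv_mul _ hMinv, Matrix.one_mulVec,
    smul_smul]
  ext i
  simp [div_mul_div_comm, one_mul]
  rw [← mul_div_assoc, inv_mul_cancel₀ hh, one_div_mul_eq_div]
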